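/- Under the LTE assumptions, the weighted contrast identifies the complier distribution function of the treated potential outcome: for every y ∈ ℝ, E[T·Z·1{Y ≤ y}/e] − E[T·(1−Z)·1{Y ≤ y}/(1−e)] = ℙ(T₁ > T₀)·ℙ(Y₁ ≤ y | T₁ > T₀). (This is the identification of F_{Y₁^c}(y) in equation (7) of Example 2.2.) -/

import Mathlib

open MeasureTheory ProbabilityTheory Set

lemma aux_weighted_int {Ω : Type*} {m : MeasurableSpace Ω} [mΩ : MeasurableSpace Ω]
    (hm : m ≤ mΩ)
    (P : Measure Ω) [IsProbabilityMeasure P]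
    {A B : Set Ω} (hA : MeasurableSet A) (hB : MeasurableSet B)
    {p : Ω → ℝ} (hpmeas : StronglyMeasurable[m] p)
    {ε : ℝ} (hε : 0 < ε) (hp : ∀ᵐ ω ∂P, ε ≤ p ω)
    (hBp : (P⟦B | m⟧) =ᵐ[P] p)
    (hprod : (P⟦A ∩ B | m⟧) =ᵐ[P] fun ω => (P⟦A | m⟧) ω * (P⟦B | m⟧) ω) :
    ∫ ω, (A ∩ B).indicator (fun _ => (1:ℝ)) ω / p ω ∂P = (P A).toReal := by
  classical
  haveI : SigmaFinite (P.trim hm) := by infer_instance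
  have hindAB : Integrable ((A ∩ B).indicator fun _ => (1:ℝ)) P :=
    (integrable_const 1).indicator (hA.inter hB)
  have hinvmeas : StronglyMeasurable[m] fun ω => (p ω)⁻¹ :=
    (hpmeas.measurable.inv).stronglyMeasurable
  have hgint : Integrable ((fun ω => (p ω)⁻¹) * ((A ∩ B).indicator fun _ => (1:ℝ))) P := by
    refine Integrable.mono' (integrable_const (ε⁻¹ : ℝ)) ?_ ?_
    · exact ((hinvmeas.mono hm).mul
        ((stronglyMeasurable_const).indicator (hA.inter hB))).aestronglyMeasurable
    · filter_upwards [hp] with ω hω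
      have hpω : 0 < p ω := lt_of_lt_of_le hε hω
      have h1 : |(A ∩ B).indicator (fun _ => (1:ℝ)) ω| ≤ 1 := by
        rw [Set.indicator_apply]; split <;> simp
      have h2 : |(p ω)⁻¹| ≤ ε⁻¹ := by
        rw [abs_of_nonneg (by positivity)]
        exact inv_anti₀ hε hω
      calc ‖(p ω)⁻¹ * (A ∩ B).indicator (fun _ => (1:ℝ)) ω‖
          = |(p ω)⁻¹| * |(A ∩ B).indicator (fun _ => (1:ℝ)) ω| := abs_mul _ _
        _ ≤ ε⁻¹ * 1 := mul_le_mul h2 h1 (abs_nonneg _) (by positivity)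
        _ = ε⁻¹ := mul_one _
  have hmul : P[(fun ω => (p ω)⁻¹) * ((A ∩ B).indicator fun _ => (1:ℝ)) | m]
      =ᵐ[P] (fun ω => (p ω)⁻¹) * (P⟦A ∩ B | m⟧) :=
    condExp_mul_of_stronglyMeasurable_left hinvmeas hgint hindAB
  calc ∫ ω, (A ∩ B).indicator (fun _ => (1:ℝ)) ω / p ω ∂P
      = ∫ ω, ((fun ω => (p ω)⁻¹) * ((A ∩ B).indicator fun _ => (1:ℝ))) ω ∂P := by
        refine integral_congr_ae (ae_of_all _ fun ω => ?_)
        simp [div_eq_inv_mul]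
    _ = ∫ ω, (P[(fun ω => (p ω)⁻¹) * ((A ∩ B).indicator fun _ => (1:ℝ)) | m]) ω ∂P :=
        (integral_condExp hm).symm
    _ = ∫ ω, (P⟦A | m⟧) ω ∂P := by
        refine integral_congr_ae ?_
        filter_upwards [hmul, hprod, hBp, hp] with ω h1 h2 h3 h4
        have hne : p ω ≠ 0 := ne_of_gt (lt_of_lt_of_le hε h4)
        rw [h1, Pi.mul_apply, h2, h3, mul_comm ((P⟦A | m⟧) ω) (p ω), ← mul_assoc,
          inv_mul_cancel₀ hne, one_mul]
    _ = ∫ ω, A.indicator (fun _ => (1:ℝ)) ω ∂P := integral_condExp hm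
    _ = (P A).toReal := integral_indicator_one hA

/-- Under the LTE assumptions — `(Y₀, Y₁, T₀, T₁) ⫫ Z | σ(X)`, overlap
(`ε ≤ e ≤ 1 − ε` a.s. for some `ε > 0`, `e` a version of `E[Z | σ(X)]`), monotonicity
`T₀ ≤ T₁` a.s., and relevance `P(T₁ > T₀) > 0` — with `T = Z·T₁ + (1−Z)·T₀` and
`Y = T·Y₁ + (1−T)·Y₀`, the weighted contrast identifies the complier distribution function
of the treated potential outcome: for every `y`,
`E[T·Z·1{Y ≤ y}/e] − E[T·(1−Z)·1{Y ≤ y}/(1−e)] = P(T₁ > T₀)·P(Y₁ ≤ y | T₁ > T₀)`. -/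
theorem weighted_contrast_identifies_complier_cdf
    {Ω : Type*} [MeasurableSpace Ω] [StandardBorelSpace Ω] [Nonempty Ω]
    (P : Measure Ω) [IsProbabilityMeasure P] {k : ℕ}
    (Y0 Y1 Z T0 T1 T Y : Ω → ℝ) (X : Ω → Fin k → ℝ)
    (hY0 : Measurable Y0) (hY1 : Measurable Y1) (hZ : Measurable Z)
    (hT0 : Measurable T0) (hT1 : Measurable T1) (hX : Measurable X)
    (hZbin : ∀ ω, Z ω = 0 ∨ Z ω = 1)
    (hT0bin : ∀ ω, T0 ω = 0 ∨ T0 ω = 1) (hT1bin : ∀ ω, T1 ω = 0 ∨ T1 ω = 1)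
    (hTdef : ∀ ω, T ω = Z ω * T1 ω + (1 - Z ω) * T0 ω)
    (hYdef : ∀ ω, Y ω = T ω * Y1 ω + (1 - T ω) * Y0 ω)
    (hci : CondIndepFun (MeasurableSpace.comap X inferInstance)
        (measurable_iff_comap_le.mp hX) (fun ω => (Y0 ω, Y1 ω, T0 ω, T1 ω)) Z P)
    (e : Ω → ℝ) (he : e =ᵐ[P] P[Z | MeasurableSpace.comap X inferInstance])
    (ε : ℝ) (hε : 0 < ε)
    (hoverlap : ∀ᵐ ω ∂P, ε ≤ e ω ∧ e ω ≤ 1 - ε)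
    (hmono : ∀ᵐ ω ∂P, T0 ω ≤ T1 ω)
    (hrel : 0 < P {ω | T0 ω < T1 ω})
    (y : ℝ) :
    ∫ ω, T ω * Z ω * (if Y ω ≤ y then (1 : ℝ) else 0) / e ω ∂P
      - ∫ ω, T ω * (1 - Z ω) * (if Y ω ≤ y then (1 : ℝ) else 0) / (1 - e ω) ∂P
      = (P {ω | T0 ω < T1 ω}).toReal
          * ((P[|{ω | T0 ω < T1 ω}]) {ω | Y1 ω ≤ y}).toReal := by
  classical
  have hm := measurable_iff_comap_le.mp hX
  set p : Ω → ℝ := P[Z | MeasurableSpace.comap X inferInstance] with hp_def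
  -- overlap for p
  have hovp : ∀ᵐ ω ∂P, ε ≤ p ω ∧ p ω ≤ 1 - ε := by
    filter_upwards [hoverlap, he] with ω h1 h2
    rw [← h2]; exact h1
  have hp_lo : ∀ᵐ ω ∂P, ε ≤ p ω := hovp.mono fun ω h => h.1
  have hp_hi : ∀ᵐ ω ∂P, ε ≤ 1 - p ω := hovp.mono fun ω h => by linarith [h.2]
  -- Z integrable
  have hZint : Integrable Z P := by
    refine Integrable.mono' (integrable_const 1) hZ.aestronglyMeasurable (ae_of_all _ fun ω => ?_)
    rcases hZbin ω with h | h <;> simp [h]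
  -- sets
  set B1 : Set Ω := Z ⁻¹' {1} with hB1_def
  set B0 : Set Ω := Z ⁻¹' {0} with hB0_def
  have hB1m : MeasurableSet B1 := hZ (measurableSet_singleton 1)
  have hB0m : MeasurableSet B0 := hZ (measurableSet_singleton 0)
  have hindB1 : B1.indicator (fun _ => (1:ℝ)) = Z := by
    funext ω; rcases hZbin ω with h | h <;>
      simp [Set.indicator_apply, hB1_def, Set.mem_preimage, h]
  have hindB0 : B0.indicator (fun _ => (1:ℝ)) = (fun _ => (1:ℝ)) - Z := by
    funext ω; rcases hZbin ω with h | h <;>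
      simp [Set.indicator_apply, hB0_def, Set.mem_preimage, h]
  have hB1p : (P⟦B1 | MeasurableSpace.comap X inferInstance⟧) =ᵐ[P] p := by rw [hindB1]
  have hB0p : (P⟦B0 | MeasurableSpace.comap X inferInstance⟧) =ᵐ[P] fun ω => 1 - p ω := by
    rw [hindB0]
    refine (condExp_sub (integrable_const 1) hZint _).trans ?_
    rw [condExp_const hm]
    exact ae_of_all _ fun ω => rfl
  -- the quadruple
  have hq : Measurable (fun ω => (Y0 ω, Y1 ω, T0 ω, T1 ω)) :=
    hY0.prodMk (hY1.prodMk (hT0.prodMk hT1))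
  have hkey := (condIndepFun_iff_condExp_inter_preimage_eq_mul
    (hm' := hm) (μ := P) hq hZ).mp hci
  set s1 : Set (ℝ × ℝ × ℝ × ℝ) := {v | v.2.2.2 = 1 ∧ v.2.1 ≤ y} with hs1_def
  set s0 : Set (ℝ × ℝ × ℝ × ℝ) := {v | v.2.2.1 = 1 ∧ v.2.1 ≤ y} with hs0_def
  have hs1 : MeasurableSet s1 := by
    apply MeasurableSet.inter
    · exact measurable_snd.snd.snd (measurableSet_singleton 1)
    · exact measurable_snd.fst measurableSet_Iic
  have hs0 : MeasurableSet s0 := by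
    apply MeasurableSet.inter
    · exact measurable_snd.snd.fst (measurableSet_singleton 1)
    · exact measurable_snd.fst measurableSet_Iic
  set A1 : Set Ω := (fun ω => (Y0 ω, Y1 ω, T0 ω, T1 ω)) ⁻¹' s1 with hA1_def
  set A0 : Set Ω := (fun ω => (Y0 ω, Y1 ω, T0 ω, T1 ω)) ⁻¹' s0 with hA0_def
  have hA1m : MeasurableSet A1 := hq hs1
  have hA0m : MeasurableSet A0 := hq hs0
  have hprod1 := hkey s1 {1} hs1 (measurableSet_singleton 1)
  have hprod0 := hkey s0 {0} hs0 (measurableSet_singleton 0)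
  -- pointwise identities
  have hpt1 : ∀ ω, T ω * Z ω * (if Y ω ≤ y then (1:ℝ) else 0)
      = (A1 ∩ B1).indicator (fun _ => (1:ℝ)) ω := by
    intro ω
    rcases hZbin ω with hz | hz
    · simp [Set.indicator_apply, hA1_def, hB1_def, Set.mem_preimage, hz]
    · have hT' : T ω = T1 ω := by rw [hTdef ω, hz]; ring
      rcases hT1bin ω with h1 | h1
      · simp [Set.indicator_apply, hA1_def, hB1_def, hs1_def, Set.mem_preimage, hz, hT', h1]
      · have hY' : Y ω = Y1 ω := by rw [hYdef ω, hT', h1]; ring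
        simp [Set.indicator_apply, hA1_def, hB1_def, hs1_def, Set.mem_preimage, hz, hT', h1, hY']
  have hpt0 : ∀ ω, T ω * (1 - Z ω) * (if Y ω ≤ y then (1:ℝ) else 0)
      = (A0 ∩ B0).indicator (fun _ => (1:ℝ)) ω := by
    intro ω
    rcases hZbin ω with hz | hz
    · have hT' : T ω = T0 ω := by rw [hTdef ω, hz]; ring
      rcases hT0bin ω with h0 | h0
      · simp [Set.indicator_apply, hA0_def, hB0_def, hs0_def, Set.mem_preimage, hz, hT', h0]
      · have hY' : Y ω = Y1 ω := by rw [hYdef ω, hT', h0]; ring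
        simp [Set.indicator_apply, hA0_def, hB0_def, hs0_def, Set.mem_preimage, hz, hT', h0, hY']
    · simp [Set.indicator_apply, hA0_def, hB0_def, Set.mem_preimage, hz]
  -- rewrite integrals
  have hL1 : ∫ ω, T ω * Z ω * (if Y ω ≤ y then (1:ℝ) else 0) / e ω ∂P
      = ∫ ω, (A1 ∩ B1).indicator (fun _ => (1:ℝ)) ω / p ω ∂P := by
    refine integral_congr_ae ?_
    filter_upwards [he] with ω hω
    rw [hpt1 ω, hω]
  have hL0 : ∫ ω, T ω * (1 - Z ω) * (if Y ω ≤ y then (1:ℝ) else 0) / (1 - e ω) ∂P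
      = ∫ ω, (A0 ∩ B0).indicator (fun _ => (1:ℝ)) ω / (1 - p ω) ∂P := by
    refine integral_congr_ae ?_
    filter_upwards [he] with ω hω
    rw [hpt0 ω, hω]
  have hI1 : ∫ ω, (A1 ∩ B1).indicator (fun _ => (1:ℝ)) ω / p ω ∂P = (P A1).toReal :=
    aux_weighted_int hm P hA1m hB1m stronglyMeasurable_condExp hε hp_lo hB1p hprod1
  have hI0 : ∫ ω, (A0 ∩ B0).indicator (fun _ => (1:ℝ)) ω / (1 - p ω) ∂P = (P A0).toReal :=
    aux_weighted_int hm P hA0m hB0m (stronglyMeasurable_const.sub stronglyMeasurable_condExp)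
      hε hp_hi hB0p hprod0
  rw [hL1, hL0, hI1, hI0]
  -- measure identity
  set C : Set Ω := {ω | T0 ω < T1 ω} ∩ {ω | Y1 ω ≤ y} with hC_def
  have hCm : MeasurableSet C := (measurableSet_lt hT0 hT1).inter (hY1 measurableSet_Iic)
  have hA0mem : ∀ ω, ω ∈ A0 ↔ (T0 ω = 1 ∧ Y1 ω ≤ y) := fun ω => Iff.rfl
  have hA1mem : ∀ ω, ω ∈ A1 ↔ (T1 ω = 1 ∧ Y1 ω ≤ y) := fun ω => Iff.rfl
  have hCmem : ∀ ω, ω ∈ C ↔ (T0 ω < T1 ω ∧ Y1 ω ≤ y) := fun ω => Iff.rfl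
  have hdisj : Disjoint A0 C := by
    rw [Set.disjoint_left]
    intro ω h0 hc
    obtain ⟨ht0, _⟩ := (hA0mem ω).mp h0
    obtain ⟨hlt, _⟩ := (hCmem ω).mp hc
    rcases hT1bin ω with h1 | h1 <;> rw [ht0, h1] at hlt <;> linarith
  have hunion : A1 =ᵐ[P] (A0 ∪ C : Set Ω) := by
    rw [Filter.eventuallyEq_set]
    filter_upwards [hmono] with ω hω
    rw [hA1mem, Set.mem_union, hA0mem, hCmem]
    constructor
    · rintro ⟨h1, hy⟩
      rcases hT0bin ω with h0 | h0
      · exact Or.inr ⟨by rw [h0, h1]; norm_num, hy⟩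
      · exact Or.inl ⟨h0, hy⟩
    · rintro (⟨h0, hy⟩ | ⟨hlt, hy⟩)
      · refine ⟨?_, hy⟩
        rcases hT1bin ω with h1 | h1
        · rw [h0, h1] at hω; linarith
        · exact h1
      · refine ⟨?_, hy⟩
        rcases hT1bin ω with h1 | h1
        · rcases hT0bin ω with h0 | h0 <;> rw [h0, h1] at hlt <;> linarith
        · exact h1
  have hPsplit : P A1 = P A0 + P C := by
    rw [measure_congr hunion, measure_union hdisj hCm]
  rw [hPsplit, ENNReal.toReal_add (measure_ne_top P _) (measure_ne_top P _),
    add_sub_cancel_left]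
  have ha0 : (P {ω | T0 ω < T1 ω}).toReal ≠ 0 :=
    ENNReal.toReal_ne_zero.mpr ⟨ne_of_gt hrel, measure_ne_top P _⟩
  rw [ProbabilityTheory.cond_apply (measurableSet_lt hT0 hT1), ENNReal.toReal_mul,
    ENNReal.toReal_inv, ← mul_assoc, mul_inv_cancel₀ ha0, one_mul, ← hC_def]
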